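/- arXiv:1405.0032 — 8 statements merged into one kernel-verified Lean document; each statement's English description precedes it below -/
import Mathlib

section
/- In the 2×2 X-channel example, suppose h[1][1][9], h[1][2][9], h[2][1][9], h[2][2][9] are all nonzero, and suppose the two effective determinants are nonzero: h[1][1][1]·h[1][2][9]·h[2][2][1]/h[2][2][9] − h[1][2][1]·h[1][1][9]·h[2][1][1]/h[2][1][9] ≠ 0 and h[2][1][4]·h[2][2][9]·h[1][2][4]/h[1][2][9] − h[2][2][4]·h[2][1][9]·h[1][1][4]/h[1][1][9] ≠ 0. Then the linear map ℂ⁴ → ℂ⁶ sending the symbols (a₁, b₁, a₂, b₂) to the noiseless received signals (y₁[1], y₁[4], y₁[9], y₂[1], y₂[4], y₂[9]) is injective; i.e., all four information symbols are uniquely recoverable from the received signals. -/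
/-- In the 2×2 X-channel example, if the two effective determinants are nonzero, the
linear map `ℂ⁴ → ℂ⁶` sending the symbols `(a₁, b₁, a₂, b₂)` to the noiseless received
signals `(y₁[1], y₁[4], y₁[9], y₂[1], y₂[4], y₂[9])` is injective. -/
theorem xchannel_decodability
    (h : ℕ → ℕ → ℕ → ℂ)
    (h119 : h 1 1 9 ≠ 0) (h129 : h 1 2 9 ≠ 0) (h219 : h 2 1 9 ≠ 0) (h229 : h 2 2 9 ≠ 0)
    (hdet1 : h 1 1 1 * (h 1 2 9 * h 2 2 1 / h 2 2 9)
        - h 1 2 1 * (h 1 1 9 * h 2 1 1 / h 2 1 9) ≠ 0)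
    (hdet2 : h 2 1 4 * (h 2 2 9 * h 1 2 4 / h 1 2 9)
        - h 2 2 4 * (h 2 1 9 * h 1 1 4 / h 1 1 9) ≠ 0) :
    Function.Injective (fun p : ℂ × ℂ × ℂ × ℂ =>
      let a₁ := p.1; let b₁ := p.2.1; let a₂ := p.2.2.1; let b₂ := p.2.2.2
      let x₁ : ℂ := (h 2 1 1 / h 2 1 9) * a₁ + (h 1 1 4 / h 1 1 9) * a₂
      let x₂ : ℂ := (h 2 2 1 / h 2 2 9) * b₁ + (h 1 2 4 / h 1 2 9) * b₂
      ((h 1 1 1 * a₁ + h 1 2 1 * b₁,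
        h 1 1 4 * a₂ + h 1 2 4 * b₂,
        h 1 1 9 * x₁ + h 1 2 9 * x₂,
        h 2 1 1 * a₁ + h 2 2 1 * b₁,
        h 2 1 4 * a₂ + h 2 2 4 * b₂,
        h 2 1 9 * x₁ + h 2 2 9 * x₂) : ℂ × ℂ × ℂ × ℂ × ℂ × ℂ)) := by
  rintro ⟨a1, b1, a2, b2⟩ ⟨c1, d1, c2, d2⟩ hpq
  simp only [Prod.mk.injEq] at hpq
  obtain ⟨E1, E2, E3, E4, E5, E6⟩ := hpq
  field_simp at E3 E6 hdet1 hdet2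
  have key1 : h 1 1 9 * h 2 1 1 * h 2 2 9 * (a1 - c1)
      + h 1 2 9 * h 2 2 1 * h 2 1 9 * (b1 - d1) = 0 := by
    have hm : (h 1 1 9 * h 2 1 1 * h 2 2 9 * (a1 - c1)
        + h 1 2 9 * h 2 2 1 * h 2 1 9 * (b1 - d1)) * (h 1 1 9 * h 1 2 9) = 0 := by
      linear_combination (h 1 1 9 * h 1 2 9) * (E3 - (h 2 1 9 * h 2 2 9) * E2)
    exact (mul_eq_zero.mp hm).resolve_right (mul_ne_zero h119 h129)
  have key2 : h 2 1 9 * h 1 1 4 * h 1 2 9 * (a2 - c2)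
      + h 2 2 9 * h 1 2 4 * h 1 1 9 * (b2 - d2) = 0 := by
    have hm : (h 2 1 9 * h 1 1 4 * h 1 2 9 * (a2 - c2)
        + h 2 2 9 * h 1 2 4 * h 1 1 9 * (b2 - d2)) * (h 2 1 9 * h 2 2 9) = 0 := by
      linear_combination (h 2 1 9 * h 2 2 9) * (E6 - (h 1 1 9 * h 1 2 9) * E4)
    exact (mul_eq_zero.mp hm).resolve_right (mul_ne_zero h219 h229)
  have ha1 : a1 = c1 := by
    have hm : (a1 - c1) * (h 1 1 1 * (h 1 2 9 * h 2 2 1) * h 2 1 9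
        - h 2 2 9 * (h 1 2 1 * (h 1 1 9 * h 2 1 1))) = 0 := by
      linear_combination (h 1 2 9 * h 2 2 1 * h 2 1 9) * E1 - h 1 2 1 * key1
    exact sub_eq_zero.mp ((mul_eq_zero.mp hm).resolve_right (by intro hc; apply hdet1; rw [div_eq_zero_iff]; left; linear_combination hc))
  have hb1 : b1 = d1 := by
    have hm : (b1 - d1) * (h 1 1 1 * (h 1 2 9 * h 2 2 1) * h 2 1 9
        - h 2 2 9 * (h 1 2 1 * (h 1 1 9 * h 2 1 1))) = 0 := by
      linear_combination h 1 1 1 * key1 - (h 1 1 9 * h 2 1 1 * h 2 2 9) * E1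
    exact sub_eq_zero.mp ((mul_eq_zero.mp hm).resolve_right (by intro hc; apply hdet1; rw [div_eq_zero_iff]; left; linear_combination hc))
  have ha2 : a2 = c2 := by
    have hm : (a2 - c2) * (h 2 1 4 * (h 2 2 9 * h 1 2 4) * h 1 1 9
        - h 1 2 9 * (h 2 2 4 * (h 2 1 9 * h 1 1 4))) = 0 := by
      linear_combination (h 2 2 9 * h 1 2 4 * h 1 1 9) * E5 - h 2 2 4 * key2
    exact sub_eq_zero.mp ((mul_eq_zero.mp hm).resolve_right (by intro hc; apply hdet2; rw [div_eq_zero_iff]; left; linear_combination hc))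
  have hb2 : b2 = d2 := by
    have hm : (b2 - d2) * (h 2 1 4 * (h 2 2 9 * h 1 2 4) * h 1 1 9
        - h 1 2 9 * (h 2 2 4 * (h 2 1 9 * h 1 1 4))) = 0 := by
      linear_combination h 2 1 4 * key2 - (h 2 1 9 * h 1 1 4 * h 1 2 9) * E5
    exact sub_eq_zero.mp ((mul_eq_zero.mp hm).resolve_right (by intro hc; apply hdet2; rw [div_eq_zero_iff]; left; linear_combination hc))
  simp [ha1, hb1, ha2, hb2]
end

section
/- In the K×2 X-channel scheme, for every phase-two time slot n the alignment identities hold: y₁[n] − y₁[t₂] = Σ_{k=1}^{K} h[1][k][n]·v₁[k][n]·s₁[k] and y₂[n] − y₂[t₁] = Σ_{k=1}^{K} h[2][k][n]·v₂[k][n]·s₂[k]. That is, with the proposed precoders the interference observed by receiver 1 at any phase-two slot equals exactly the equation y₁[t₂] it overheard in phase one (and symmetrically for receiver 2), so subtracting it leaves a linear combination of the desired symbols only. -/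
open Finset

/-- In the K×2 X-channel scheme, for every phase-two slot `n ∈ T₂` the alignment
identities hold:
`y₁[n] − y₁[t₂] = Σ_{k=1}^{K} h₁ₖ[n]·v₁ₖ[n]·s₁ₖ` and
`y₂[n] − y₂[t₁] = Σ_{k=1}^{K} h₂ₖ[n]·v₂ₖ[n]·s₂ₖ`. -/
theorem Kx2_xchannel_alignment
    (K : ℕ) (hK : 1 ≤ K)
    (h : ℕ → ℕ → ℕ → ℂ) (t₁ t₂ : ℕ) (T₂ : Set ℕ)
    (s : ℕ → ℕ → ℂ)
    (hnz : ∀ k ∈ Finset.Icc 1 K, ∀ n ∈ T₂, h 1 k n ≠ 0 ∧ h 2 k n ≠ 0)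
    (v : ℕ → ℕ → ℕ → ℂ)
    (hv1 : ∀ k, ∀ n ∈ T₂, v 1 k n = h 2 k t₁ / h 2 k n)
    (hv2 : ∀ k, ∀ n ∈ T₂, v 2 k n = h 1 k t₂ / h 1 k n)
    (x : ℕ → ℕ → ℂ)
    (hx : ∀ k, ∀ n ∈ T₂, x k n = v 1 k n * s 1 k + v 2 k n * s 2 k)
    (y : ℕ → ℕ → ℂ)
    (hyt1 : ∀ ℓ, y ℓ t₁ = ∑ k ∈ Finset.Icc 1 K, h ℓ k t₁ * s 1 k)
    (hyt2 : ∀ ℓ, y ℓ t₂ = ∑ k ∈ Finset.Icc 1 K, h ℓ k t₂ * s 2 k)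
    (hyn : ∀ ℓ, ∀ n ∈ T₂, y ℓ n = ∑ k ∈ Finset.Icc 1 K, h ℓ k n * x k n) :
    ∀ n ∈ T₂,
      y 1 n - y 1 t₂ = ∑ k ∈ Finset.Icc 1 K, h 1 k n * v 1 k n * s 1 k ∧
      y 2 n - y 2 t₁ = ∑ k ∈ Finset.Icc 1 K, h 2 k n * v 2 k n * s 2 k := by
  intro n hn
  constructor
  · rw [hyn 1 n hn, hyt2 1, ← Finset.sum_sub_distrib]
    apply Finset.sum_congr rfl
    intro k hk
    rw [hx k n hn, hv2 k n hn]
    field_simp [(hnz k hk n hn).1]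
    ring
  · rw [hyn 2 n hn, hyt1 2, ← Finset.sum_sub_distrib]
    apply Finset.sum_congr rfl
    intro k hk
    rw [hx k n hn, hv1 k n hn]
    field_simp [(hnz k hk n hn).2]
    ring
end

section
/- For every K ≥ 1, for Lebesgue-almost every tuple of channel coefficients (h[1][k][t_j], h[2][k][t_j]) ∈ ℂ^{2K(K+1)} (k ∈ {1,…,K}, j ∈ {1,…,K+1}), all coefficients h[2][k][t_j] are nonzero and the K×K effective channel matrix Ĥ₁ — whose first row has entries h[1][k][t₁] and whose row indexed by j ∈ {3,…,K+1} has entries h[1][k][t_j]·h[2][k][t₁]/h[2][k][t_j] (column index k) — is invertible. Equivalently, the set of tuples for which some h[2][k][t_j] vanishes or Ĥ₁ is singular has Lebesgue measure zero. -/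
open MeasureTheory

open MvPolynomial in
section

lemma measurable_mvpoly_eval {σ : Type*} (p : MvPolynomial σ ℂ) :
    Measurable fun x : σ → ℂ => MvPolynomial.eval x p := by
  induction p using MvPolynomial.induction_on with
  | C a => simp
  | add p q hp hq => simp only [map_add]; exact hp.add hq
  | mul_X p i hp => simp only [map_mul, MvPolynomial.eval_X]; exact hp.mul (measurable_pi_apply i)

lemma mvpoly_zero_null_fin : ∀ (n : ℕ) (p : MvPolynomial (Fin n) ℂ), p ≠ 0 →
    (volume : Measure (Fin n → ℂ)) {x | MvPolynomial.eval x p = 0} = 0 := by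
  intro n
  induction n with
  | zero =>
    intro p hp
    obtain ⟨a, rfl⟩ := MvPolynomial.C_surjective (Fin 0) p
    have ha : a ≠ 0 := fun h => hp (by simp [h])
    simp [ha]
  | succ n ih =>
    intro p hp
    set q := MvPolynomial.finSuccEquiv ℂ n p with hqdef
    have hq0 : q ≠ 0 := fun h => hp ((finSuccEquiv ℂ n).injective (by simp [← hqdef, h]))
    have hc : q.leadingCoeff ≠ 0 := Polynomial.leadingCoeff_ne_zero.mpr hq0
    have hmeas : MeasurableSet {x : Fin (n+1) → ℂ | MvPolynomial.eval x p = 0} :=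
      (measurable_mvpoly_eval p) (measurableSet_singleton 0)
    set e := MeasurableEquiv.piFinSuccAbove (fun _ : Fin (n+1) => ℂ) 0 with hedef
    have hpres := MeasureTheory.volume_preserving_piFinSuccAbove (fun _ : Fin (n+1) => ℂ) 0
    have h1 : (volume : Measure (Fin (n+1) → ℂ)) {x | MvPolynomial.eval x p = 0}
        = volume (e.symm ⁻¹' {x | MvPolynomial.eval x p = 0}) :=
      ((MeasurePreserving.symm e hpres).measure_preimage hmeas.nullMeasurableSet).symm
    rw [h1]
    set S : Set (ℂ × (Fin n → ℂ)) := e.symm ⁻¹' {x | MvPolynomial.eval x p = 0} with hS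
    have hSmeas : MeasurableSet S := e.symm.measurable hmeas
    have hss : Prod.swap ⁻¹' (Prod.swap ⁻¹' S) = S := by
      ext z; simp
    have h2 : (volume : Measure (ℂ × (Fin n → ℂ))) S
        = ((volume : Measure (Fin n → ℂ)).prod (volume : Measure ℂ)) (Prod.swap ⁻¹' S) := by
      rw [Measure.volume_eq_prod,
        ← Measure.measurePreserving_swap.measure_preimage
          (measurable_swap hSmeas).nullMeasurableSet, hss]
    rw [h2, Measure.measure_prod_null (measurable_swap hSmeas)]
    have hbad := ih q.leadingCoeff hc
    refine (measure_eq_zero_iff_ae_notMem.mp hbad).mono fun x hx => ?_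
    have hx' : MvPolynomial.eval x q.leadingCoeff ≠ 0 := hx
    have hmapne : q.map (MvPolynomial.eval x) ≠ 0 := by
      intro h
      apply hx'
      have h2 := congrArg (fun r => Polynomial.coeff r q.natDegree) h
      simp only [Polynomial.coeff_map, Polynomial.coeff_zero] at h2
      rw [Polynomial.leadingCoeff]
      exact h2
    have hsec : ∀ y : ℂ, ((y, x) ∈ S ↔ Polynomial.eval y (q.map (MvPolynomial.eval x)) = 0) := by
      intro y
      have hsymm : e.symm (y, x) = Fin.cons y x := by
        rw [hedef]
        simp only [MeasurableEquiv.piFinSuccAbove_symm_apply]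
        exact Fin.insertNth_zero' y x
      simp only [hS, Set.mem_preimage, Set.mem_setOf_eq, hsymm]
      rw [MvPolynomial.eval_eq_eval_mv_eval']
    have hsec2 : Prod.mk x ⁻¹' (Prod.swap ⁻¹' S)
        = {y : ℂ | Polynomial.eval y (q.map (MvPolynomial.eval x)) = 0} := by
      ext y
      simpa using hsec y
    show volume (Prod.mk x ⁻¹' (Prod.swap ⁻¹' S)) = 0
    rw [hsec2]
    exact Set.Finite.measure_zero (Polynomial.finite_setOf_isRoot hmapne) _

lemma mvpoly_zero_null {ι : Type*} [Fintype ι] (p : MvPolynomial ι ℂ) (hp : p ≠ 0) :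
    (volume : Measure (ι → ℂ)) {x | MvPolynomial.eval x p = 0} = 0 := by
  set n := Fintype.card ι
  set e : Fin n ≃ ι := (Fintype.equivFin ι).symm with hedef
  have hpres := MeasureTheory.volume_measurePreserving_piCongrLeft (fun _ : ι => ℂ) e
  have hmeas : MeasurableSet {x : ι → ℂ | MvPolynomial.eval x p = 0} :=
    (measurable_mvpoly_eval p) (measurableSet_singleton 0)
  rw [← hpres.measure_preimage hmeas.nullMeasurableSet]
  have happ : ∀ x : Fin n → ℂ, (MeasurableEquiv.piCongrLeft (fun _ : ι => ℂ) e) x = x ∘ e.symm := by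
    intro x
    funext i
    have : i = e (e.symm i) := (Equiv.apply_symm_apply e i).symm
    rw [MeasurableEquiv.coe_piCongrLeft]
    conv_lhs => rw [this]
    rw [Equiv.piCongrLeft_apply_apply]
    rfl
  have hset : (MeasurableEquiv.piCongrLeft (fun _ : ι => ℂ) e) ⁻¹' {x | MvPolynomial.eval x p = 0}
      = {x : Fin n → ℂ | MvPolynomial.eval x (MvPolynomial.rename e.symm p) = 0} := by
    ext x
    simp [happ x, MvPolynomial.eval_rename]
  rw [hset]
  exact mvpoly_zero_null_fin n _
    (fun h => hp ((MvPolynomial.rename_injective _ e.symm.injective) (by simp [h])))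



end

/-- For every `K ≥ 1`, for Lebesgue-almost every tuple of channel coefficients
`g : Fin 2 × Fin K × Fin (K+1) → ℂ` (where `g (ℓ, k, j)` is `h[ℓ+1][k+1][t_{j+1}]`),
all coefficients `h[2][k][t_j]` are nonzero and the `K×K` effective channel matrix
`Ĥ₁` — whose first row has entries `h[1][k][t₁]` and whose row indexed by
`j ∈ {3,…,K+1}` has entries `h[1][k][t_j]·h[2][k][t₁]/h[2][k][t_j]` — is invertible. -/
theorem Kx2_effective_matrix_invertible_ae (K : ℕ) (hK : 1 ≤ K) :
    ∀ᵐ g : Fin 2 × Fin K × Fin (K + 1) → ℂ,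
      (∀ (k : Fin K) (j : Fin (K + 1)), g (1, k, j) ≠ 0) ∧
      IsUnit (Matrix.of (fun i k : Fin K =>
        if (i : ℕ) = 0 then g (0, k, 0)
        else g (0, k, i.succ) * g (1, k, 0) / g (1, k, i.succ))) := by
  open MvPolynomial in
  classical
  set den : Fin K → Fin K → MvPolynomial (Fin 2 × Fin K × Fin (K + 1)) ℂ :=
    fun i k => if (i : ℕ) = 0 then 1 else X (1, k, i.succ) with hden
  set num : Fin K → Fin K → MvPolynomial (Fin 2 × Fin K × Fin (K + 1)) ℂ :=
    fun i k => if (i : ℕ) = 0 then X (0, k, 0)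
      else X (0, k, i.succ) * X (1, k, 0) with hnum
  set B : Matrix (Fin K) (Fin K) (MvPolynomial (Fin 2 × Fin K × Fin (K + 1)) ℂ) :=
    Matrix.of (fun i k => num i k * ∏ k' ∈ Finset.univ.erase k, den i k') with hB
  set P : MvPolynomial (Fin 2 × Fin K × Fin (K + 1)) ℂ :=
    B.det * ∏ k : Fin K, ∏ j : Fin (K + 1), X (1, k, j) with hP
  -- the witness point where the matrix evaluates to the identity
  set g₀ : Fin 2 × Fin K × Fin (K + 1) → ℂ := fun v =>
    if v.1 = 0 then
      (if (v.2.2 : ℕ) = 0 then (if (v.2.1 : ℕ) = 0 then 1 else 0)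
       else (if (v.2.2 : ℕ) = (v.2.1 : ℕ) + 1 then 1 else 0))
    else 1 with hg₀
  have h10 : ((1 : Fin 2) = 0) = False := by simp [Fin.ext_iff]
  have hB1 : ∀ i k : Fin K, eval g₀ (B i k) = if i = k then 1 else 0 := by
    intro i k
    have hdeval : ∀ k' : Fin K, eval g₀ (den i k') = 1 := by
      intro k'
      by_cases hi : (i : ℕ) = 0 <;> simp [hden, hi, hg₀, h10]
    rw [hB]
    simp only [Matrix.of_apply, map_mul, map_prod, hdeval, Finset.prod_const_one, mul_one]
    by_cases hi : (i : ℕ) = 0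
    · have : (i = k) = ((k : ℕ) = 0) := by
        simp [Fin.ext_iff, hi, eq_comm]
      simp [hnum, hi, hg₀, this]
    · simp only [hnum, hi, if_false, map_mul, eval_X, hg₀]
      simp [h10, Fin.val_succ, Fin.ext_iff]
  have hdetg₀ : eval g₀ B.det = 1 := by
    rw [RingHom.map_det, RingHom.mapMatrix_apply]
    have : B.map (eval g₀) = 1 := by
      ext i k
      simp only [Matrix.map_apply, Matrix.one_apply]
      exact hB1 i k
    rw [this, Matrix.det_one]
  have hdetne : B.det ≠ 0 := by
    intro h
    rw [h, map_zero] at hdetg₀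
    exact zero_ne_one hdetg₀
  have hPne : P ≠ 0 := by
    rw [hP]
    refine mul_ne_zero hdetne ?_
    refine Finset.prod_ne_zero_iff.mpr fun k _ => ?_
    exact Finset.prod_ne_zero_iff.mpr fun j _ => MvPolynomial.X_ne_zero _
  have hnull := mvpoly_zero_null P hPne
  refine (measure_eq_zero_iff_ae_notMem.mp hnull).mono fun g hg => ?_
  have hPg : eval g P ≠ 0 := hg
  have hPeval : eval g P = Matrix.det (B.map (eval g)) * ∏ k : Fin K, ∏ j : Fin (K + 1), g (1, k, j) := by
    rw [hP, map_mul, RingHom.map_det, RingHom.mapMatrix_apply]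
    congr 1
    simp
  rw [hPeval] at hPg
  have hdetB : Matrix.det (B.map (eval g)) ≠ 0 := fun h => hPg (by rw [h, zero_mul])
  have hprodne : (∏ k : Fin K, ∏ j : Fin (K + 1), g (1, k, j)) ≠ 0 :=
    fun h => hPg (by rw [h, mul_zero])
  have hgne : ∀ (k : Fin K) (j : Fin (K + 1)), g (1, k, j) ≠ 0 := by
    intro k j
    have h1 := Finset.prod_ne_zero_iff.mp hprodne k (Finset.mem_univ k)
    exact Finset.prod_ne_zero_iff.mp h1 j (Finset.mem_univ j)
  refine ⟨hgne, ?_⟩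
  set H : Matrix (Fin K) (Fin K) ℂ := Matrix.of (fun i k : Fin K =>
    if (i : ℕ) = 0 then g (0, k, 0)
    else g (0, k, i.succ) * g (1, k, 0) / g (1, k, i.succ)) with hH
  set r : Fin K → ℂ := fun i => ∏ k' : Fin K, (if (i : ℕ) = 0 then 1 else g (1, k', i.succ)) with hr
  have hBH : B.map (eval g) = Matrix.of (fun i k => r i * H i k) := by
    ext i k
    simp only [Matrix.map_apply, Matrix.of_apply, hB]
    by_cases hi : (i : ℕ) = 0
    · simp [hnum, hden, hr, hH, hi]
    · have hne := hgne k i.succ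
      simp only [hnum, hden, hr, hH, hi, if_false, Matrix.of_apply, map_mul, map_prod, eval_X]
      rw [← Finset.mul_prod_erase Finset.univ _ (Finset.mem_univ k)]
      field_simp
  have hdetH : H.det ≠ 0 := by
    intro h
    apply hdetB
    rw [hBH]
    rw [Matrix.det_mul_column r H, h, mul_zero]
  exact (Matrix.isUnit_iff_isUnit_det _).mpr (isUnit_iff_ne_zero.mpr hdetH)
end

section
/- In the K×2 X-channel scheme, if all h[1][k][n] and h[2][k][n] are nonzero for n ∈ T₂ and the K×K effective channel matrix Ĥ₁ (first row h[1][k][t₁], remaining rows h[1][k][t_j]·h[2][k][t₁]/h[2][k][t_j] for j ∈ {3,…,K+1}) is invertible, then the symbols (s₁[1],…,s₁[K]) are uniquely determined by receiver 1's noiseless observations (y₁[t₁], y₁[t₂], y₁[t₃],…,y₁[t_{K+1}]): the map (s₁[1],…,s₁[K],s₂[1],…,s₂[K]) ↦ (y₁[t₁],…,y₁[t_{K+1}]) determines the first K coordinates, i.e., any two symbol tuples producing the same observations at receiver 1 agree in s₁[1],…,s₁[K]. -/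
open Finset

/-- In the K×2 X-channel scheme, if all phase-two channel coefficients are nonzero and
the `K×K` effective channel matrix `Ĥ₁` is invertible, then any two symbol tuples
producing the same noiseless observations `(y₁[t₁], …, y₁[t_{K+1}])` at receiver 1
agree in the symbols `s₁[1], …, s₁[K]`. -/
theorem Kx2_xchannel_zero_forcing
    (K : ℕ) (hK : 1 ≤ K)
    (h : ℕ → ℕ → ℕ → ℂ) (t : ℕ → ℕ)
    (s s' : ℕ → ℕ → ℂ)
    (hnz : ∀ k ∈ Finset.Icc 1 K, ∀ j ∈ Finset.Icc 3 (K + 1),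
      h 1 k (t j) ≠ 0 ∧ h 2 k (t j) ≠ 0)
    (hH : IsUnit (Matrix.of (fun i k : Fin K =>
      if (i : ℕ) = 0 then h 1 ((k : ℕ) + 1) (t 1)
      else h 1 ((k : ℕ) + 1) (t ((i : ℕ) + 2)) * h 2 ((k : ℕ) + 1) (t 1)
        / h 2 ((k : ℕ) + 1) (t ((i : ℕ) + 2)))))
    (y y' : ℕ → ℕ → ℂ)
    (hy1 : ∀ ℓ, y ℓ (t 1) = ∑ k ∈ Finset.Icc 1 K, h ℓ k (t 1) * s 1 k)
    (hy2 : ∀ ℓ, y ℓ (t 2) = ∑ k ∈ Finset.Icc 1 K, h ℓ k (t 2) * s 2 k)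
    (hyn : ∀ ℓ, ∀ j ∈ Finset.Icc 3 (K + 1), y ℓ (t j) =
      ∑ k ∈ Finset.Icc 1 K, h ℓ k (t j) *
        ((h 2 k (t 1) / h 2 k (t j)) * s 1 k + (h 1 k (t 2) / h 1 k (t j)) * s 2 k))
    (hy1' : ∀ ℓ, y' ℓ (t 1) = ∑ k ∈ Finset.Icc 1 K, h ℓ k (t 1) * s' 1 k)
    (hy2' : ∀ ℓ, y' ℓ (t 2) = ∑ k ∈ Finset.Icc 1 K, h ℓ k (t 2) * s' 2 k)
    (hyn' : ∀ ℓ, ∀ j ∈ Finset.Icc 3 (K + 1), y' ℓ (t j) =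
      ∑ k ∈ Finset.Icc 1 K, h ℓ k (t j) *
        ((h 2 k (t 1) / h 2 k (t j)) * s' 1 k + (h 1 k (t 2) / h 1 k (t j)) * s' 2 k))
    (hobs : ∀ j ∈ Finset.Icc 1 (K + 1), y 1 (t j) = y' 1 (t j)) :
    ∀ k ∈ Finset.Icc 1 K, s 1 k = s' 1 k := by
  -- differences
  set d : ℕ → ℂ := fun k => s 1 k - s' 1 k with hd
  set e : ℕ → ℂ := fun k => s 2 k - s' 2 k with he
  have key : ∀ f : ℕ → ℂ, (∑ k ∈ Finset.Icc 1 K, f k) = ∑ k : Fin K, f ((k : ℕ) + 1) := by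
    intro f
    rw [show Finset.Icc 1 K = Finset.Ico 1 (K+1) by rfl, Finset.sum_Ico_eq_sum_range,
      Fin.sum_univ_eq_sum_range (fun k => f (k + 1)) K]
    simp [add_comm]
  have h1mem : (1 : ℕ) ∈ Finset.Icc 1 (K + 1) := by
    simp [Nat.le_add_left]
  have h2mem : (2 : ℕ) ∈ Finset.Icc 1 (K + 1) := by
    simp [Nat.succ_le_succ hK]
  have Eq1 : (∑ k ∈ Finset.Icc 1 K, h 1 k (t 1) * d k) = 0 := by
    have := hobs 1 h1mem
    rw [hy1 1, hy1' 1] at this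
    simp only [hd, mul_sub, Finset.sum_sub_distrib]
    rw [this]; ring
  have Eq2 : (∑ k ∈ Finset.Icc 1 K, h 1 k (t 2) * e k) = 0 := by
    have := hobs 2 h2mem
    rw [hy2 1, hy2' 1] at this
    simp only [he, mul_sub, Finset.sum_sub_distrib]
    rw [this]; ring
  have Eqj : ∀ j ∈ Finset.Icc 3 (K + 1),
      (∑ k ∈ Finset.Icc 1 K,
        (h 1 k (t j) * h 2 k (t 1) / h 2 k (t j) * d k + h 1 k (t 2) * e k)) = 0 := by
    intro j hj
    have hjmem : j ∈ Finset.Icc 1 (K + 1) := by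
      simp only [Finset.mem_Icc] at hj ⊢
      omega
    have hobs' := hobs j hjmem
    rw [hyn 1 j hj, hyn' 1 j hj] at hobs'
    have hterm : ∀ k ∈ Finset.Icc 1 K,
        h 1 k (t j) * ((h 2 k (t 1) / h 2 k (t j)) * s 1 k + (h 1 k (t 2) / h 1 k (t j)) * s 2 k)
        - h 1 k (t j) * ((h 2 k (t 1) / h 2 k (t j)) * s' 1 k + (h 1 k (t 2) / h 1 k (t j)) * s' 2 k)
        = h 1 k (t j) * h 2 k (t 1) / h 2 k (t j) * d k + h 1 k (t 2) * e k := by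
      intro k hk
      obtain ⟨hnz1, hnz2⟩ := hnz k hk j hj
      field_simp [hd, he]
      ring
    calc (∑ k ∈ Finset.Icc 1 K,
            (h 1 k (t j) * h 2 k (t 1) / h 2 k (t j) * d k + h 1 k (t 2) * e k))
        = ∑ k ∈ Finset.Icc 1 K,
            (h 1 k (t j) * ((h 2 k (t 1) / h 2 k (t j)) * s 1 k + (h 1 k (t 2) / h 1 k (t j)) * s 2 k)
            - h 1 k (t j) * ((h 2 k (t 1) / h 2 k (t j)) * s' 1 k + (h 1 k (t 2) / h 1 k (t j)) * s' 2 k)) := by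
          exact Finset.sum_congr rfl fun k hk => (hterm k hk).symm
      _ = 0 := by rw [Finset.sum_sub_distrib, hobs']; ring
  -- Matrix equation
  set M : Matrix (Fin K) (Fin K) ℂ := Matrix.of (fun i k : Fin K =>
      if (i : ℕ) = 0 then h 1 ((k : ℕ) + 1) (t 1)
      else h 1 ((k : ℕ) + 1) (t ((i : ℕ) + 2)) * h 2 ((k : ℕ) + 1) (t 1)
        / h 2 ((k : ℕ) + 1) (t ((i : ℕ) + 2))) with hM
  have hMv : M.mulVec (fun k => d ((k : ℕ) + 1)) = 0 := by
    funext i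
    simp only [Matrix.mulVec, dotProduct, hM, Matrix.of_apply, Pi.zero_apply]
    by_cases hi : (i : ℕ) = 0
    · simp only [hi, if_true, eq_self_iff_true]
      rw [← key (fun k => h 1 k (t 1) * d k)]
      exact Eq1
    · simp only [if_neg hi]
      have hjmem : (i : ℕ) + 2 ∈ Finset.Icc 3 (K + 1) := by
        have := i.isLt
        simp only [Finset.mem_Icc]
        omega
      have := Eqj ((i : ℕ) + 2) hjmem
      rw [key (fun k => h 1 k (t ((i : ℕ) + 2)) * h 2 k (t 1) / h 2 k (t ((i : ℕ) + 2)) * d k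
          + h 1 k (t 2) * e k)] at this
      rw [Finset.sum_add_distrib] at this
      rw [← key (fun k => h 1 k (t 2) * e k), Eq2, add_zero] at this
      exact this
  have hinj := Matrix.mulVec_injective_iff_isUnit.mpr hH
  rw [hM] at hinj
  have hzero : (fun k : Fin K => d ((k : ℕ) + 1)) = 0 := by
    apply hinj
    rw [hMv, Matrix.mulVec_zero]
  intro k hk
  simp only [Finset.mem_Icc] at hk
  have hk' : k - 1 < K := by omega
  have := congrFun hzero ⟨k - 1, hk'⟩
  simp only [Pi.zero_apply] at this
  have hkk : k - 1 + 1 = k := by omega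
  rw [hkk] at this
  have h0 : s 1 k - s' 1 k = 0 := this
  exact sub_eq_zero.mp h0
end

section
/- In the three-user interference channel scheme, the aligned-interference identity holds at receiver 3 in time slot 4: y₃[4] − y₃[1] = h[3][1][4]·(h[2][1][2]/h[2][1][4])·a₂ + h[3][3][4]·(h[2][3][2]/h[2][3][4])·c₁. That is, the contribution of the symbols a₁ and b₁ in y₃[4] coincides exactly with the equation y₃[1] received in time slot 1, so subtracting it leaves a linear combination of a₂ and c₁ only. -/
/-- Aligned-interference identity at receiver 3 in time slot 4 of the three-user interference channel scheme: `y₃[4] − y₃[1] = h₃₁[4]·(h₂₁[2]/h₂₁[4])·a₂ + h₃₃[4]·(h₂₃[2]/h₂₃[4])·c₁`. -/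
theorem threeUserIC_alignment_rx3_slot4
    (h : ℕ → ℕ → ℕ → ℂ) (a₁ a₂ b₁ b₂ c₁ c₂ : ℂ)
    (h314 : h 3 1 4 ≠ 0) (h214 : h 2 1 4 ≠ 0) (h324 : h 3 2 4 ≠ 0) (h234 : h 2 3 4 ≠ 0)
    (h315 : h 3 1 5 ≠ 0) (h325 : h 3 2 5 ≠ 0) (h125 : h 1 2 5 ≠ 0) (h135 : h 1 3 5 ≠ 0)
    (x : ℕ → ℕ → ℂ)
    (hx11 : x 1 1 = a₁) (hx21 : x 2 1 = b₁) (hx31 : x 3 1 = 0)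
    (hx12 : x 1 2 = a₂) (hx22 : x 2 2 = 0) (hx32 : x 3 2 = c₁)
    (hx13 : x 1 3 = 0) (hx23 : x 2 3 = b₂) (hx33 : x 3 3 = c₂)
    (hx14 : x 1 4 = (h 3 1 1 / h 3 1 4) * a₁ + (h 2 1 2 / h 2 1 4) * a₂)
    (hx24 : x 2 4 = (h 3 2 1 / h 3 2 4) * b₁)
    (hx34 : x 3 4 = (h 2 3 2 / h 2 3 4) * c₁)
    (hx15 : x 1 5 = (h 3 1 1 / h 3 1 5) * a₁)
    (hx25 : x 2 5 = (h 3 2 1 / h 3 2 5) * b₁ + (h 1 2 3 / h 1 2 5) * b₂)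
    (hx35 : x 3 5 = (h 1 3 3 / h 1 3 5) * c₂)
    (y : ℕ → ℕ → ℂ)
    (hy : ∀ ℓ t, y ℓ t = h ℓ 1 t * x 1 t + h ℓ 2 t * x 2 t + h ℓ 3 t * x 3 t) :
    y 3 4 - y 3 1 = h 3 1 4 * (h 2 1 2 / h 2 1 4) * a₂ + h 3 3 4 * (h 2 3 2 / h 2 3 4) * c₁ := by
  rw [hy, hy, hx14, hx24, hx34, hx11, hx21, hx31]
  field_simp
  ring
end

section
/- In the three-user interference channel scheme, suppose the following three 2×2 effective determinants are nonzero: (i) h[1][1][1]·h[1][2][5]·h[3][2][1]/h[3][2][5] − h[1][2][1]·h[1][1][5]·h[3][1][1]/h[3][1][5] ≠ 0; (ii) h[1][1][2]·h[1][3][4]·h[2][3][2]/h[2][3][4] − h[1][3][2]·h[1][1][4]·h[2][1][2]/h[2][1][4] ≠ 0; (iii) h[2][2][3]·h[2][3][5]·h[1][3][3]/h[1][3][5] − h[2][3][3]·h[2][2][5]·h[1][2][3]/h[1][2][5] ≠ 0. Then the linear map ℂ⁶ → ℂ¹⁵ sending the symbols (a₁, a₂, b₁, b₂, c₁, c₂)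 to the noiseless received signals (y_ℓ[t]) for ℓ ∈ {1,2,3}, t ∈ {1,…,5} is injective; i.e., all six information symbols are uniquely recoverable from the received signals. -/
private theorem solve2 {M11 M12 M21 M22 x y : ℂ} (hdet : M11 * M22 - M12 * M21 ≠ 0)
    (e1 : M11 * x + M12 * y = 0) (e2 : M21 * x + M22 * y = 0) : x = 0 ∧ y = 0 := by
  constructor
  · have hx : (M11 * M22 - M12 * M21) * x = 0 := by linear_combination M22 * e1 - M12 * e2
    exact (mul_eq_zero.mp hx).resolve_left hdet
  · have hy : (M11 * M22 - M12 * M21) * y = 0 := by linear_combination M11 * e2 - M21 * e1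
    exact (mul_eq_zero.mp hy).resolve_left hdet

/-- In the three-user interference channel scheme, if the three 2×2 effective
determinants are nonzero, then the linear map `ℂ⁶ → ℂ¹⁵` sending the symbols
`(a₁, a₂, b₁, b₂, c₁, c₂)` to the noiseless received signals `(y_ℓ[t])`, `ℓ ∈ {1,2,3}`,
`t ∈ {1,…,5}`, is injective: any two symbol tuples producing the same received signals
coincide. -/
theorem threeUserIC_decodability
    (h : ℕ → ℕ → ℕ → ℂ)
    (h314 : h 3 1 4 ≠ 0) (h214 : h 2 1 4 ≠ 0) (h324 : h 3 2 4 ≠ 0) (h234 : h 2 3 4 ≠ 0)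
    (h315 : h 3 1 5 ≠ 0) (h325 : h 3 2 5 ≠ 0) (h125 : h 1 2 5 ≠ 0) (h135 : h 1 3 5 ≠ 0)
    (hdet1 : h 1 1 1 * (h 1 2 5 * h 3 2 1 / h 3 2 5)
        - h 1 2 1 * (h 1 1 5 * h 3 1 1 / h 3 1 5) ≠ 0)
    (hdet2 : h 1 1 2 * (h 1 3 4 * h 2 3 2 / h 2 3 4)
        - h 1 3 2 * (h 1 1 4 * h 2 1 2 / h 2 1 4) ≠ 0)
    (hdet3 : h 2 2 3 * (h 2 3 5 * h 1 3 3 / h 1 3 5)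
        - h 2 3 3 * (h 2 2 5 * h 1 2 3 / h 1 2 5) ≠ 0) :
    Function.Injective (fun p : ℂ × ℂ × ℂ × ℂ × ℂ × ℂ =>
      let a₁ := p.1; let a₂ := p.2.1; let b₁ := p.2.2.1; let b₂ := p.2.2.2.1
      let c₁ := p.2.2.2.2.1; let c₂ := p.2.2.2.2.2
      -- transmit signals x k t for k ∈ {1,2,3}, t ∈ {1,…,5}
      let x : ℕ → ℕ → ℂ := fun k t =>
        if t = 1 then (if k = 1 then a₁ else if k = 2 then b₁ else 0)
        else if t = 2 then (if k = 1 then a₂ else if k = 2 then 0 else c₁)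
        else if t = 3 then (if k = 1 then 0 else if k = 2 then b₂ else c₂)
        else if t = 4 then
          (if k = 1 then (h 3 1 1 / h 3 1 4) * a₁ + (h 2 1 2 / h 2 1 4) * a₂
           else if k = 2 then (h 3 2 1 / h 3 2 4) * b₁
           else (h 2 3 2 / h 2 3 4) * c₁)
        else
          (if k = 1 then (h 3 1 1 / h 3 1 5) * a₁
           else if k = 2 then (h 3 2 1 / h 3 2 5) * b₁ + (h 1 2 3 / h 1 2 5) * b₂
           else (h 1 3 3 / h 1 3 5) * c₂)
      -- noiseless received signals y ℓ t
      (fun (ℓ : Fin 3) (τ : Fin 5) =>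
        h ((ℓ : ℕ) + 1) 1 ((τ : ℕ) + 1) * x 1 ((τ : ℕ) + 1)
          + h ((ℓ : ℕ) + 1) 2 ((τ : ℕ) + 1) * x 2 ((τ : ℕ) + 1)
          + h ((ℓ : ℕ) + 1) 3 ((τ : ℕ) + 1) * x 3 ((τ : ℕ) + 1))) := by
  intro p q hpq
  have E1 := congrFun (congrFun hpq (0 : Fin 3)) (0 : Fin 5)
  have E2 := congrFun (congrFun hpq (0 : Fin 3)) (4 : Fin 5)
  have E3 := congrFun (congrFun hpq (0 : Fin 3)) (2 : Fin 5)
  have E4 := congrFun (congrFun hpq (0 : Fin 3)) (1 : Fin 5)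
  have E5 := congrFun (congrFun hpq (0 : Fin 3)) (3 : Fin 5)
  have E6 := congrFun (congrFun hpq (1 : Fin 3)) (2 : Fin 5)
  have E7 := congrFun (congrFun hpq (1 : Fin 3)) (4 : Fin 5)
  norm_num [show ((0:Fin 5):ℕ)=0 from rfl, show ((1:Fin 5):ℕ)=1 from rfl,
    show ((2:Fin 5):ℕ)=2 from rfl, show ((3:Fin 5):ℕ)=3 from rfl,
    show ((4:Fin 5):ℕ)=4 from rfl, show ((0:Fin 3):ℕ)=0 from rfl,
    show ((1:Fin 3):ℕ)=1 from rfl] at E1 E2 E3 E4 E5 E6 E7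
  simp only [show (4:Fin 5) ≠ 0 by decide, show (2:Fin 5) ≠ 0 by decide,
    show (3:Fin 5) ≠ 0 by decide, if_false] at E2 E3 E5 E6 E7
  clear hpq
  have k125 : h 1 2 5 * (h 1 2 3 / h 1 2 5) = h 1 2 3 := mul_div_cancel₀ _ h125
  have k135 : h 1 3 5 * (h 1 3 3 / h 1 3 5) = h 1 3 3 := mul_div_cancel₀ _ h135
  have F1 : h 1 1 1 * (p.1 - q.1) + h 1 2 1 * (p.2.2.1 - q.2.2.1) = 0 := by
    linear_combination E1
  have F2 : (h 1 1 5 * h 3 1 1 / h 3 1 5) * (p.1 - q.1)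
      + (h 1 2 5 * h 3 2 1 / h 3 2 5) * (p.2.2.1 - q.2.2.1) = 0 := by
    linear_combination E2 - E3 - (p.2.2.2.1 - q.2.2.2.1) * k125
      - (p.2.2.2.2.2 - q.2.2.2.2.2) * k135
  obtain ⟨hA1, hB1⟩ := solve2 hdet1 F1 (by linear_combination F2)
  have F3 : h 1 1 2 * (p.2.1 - q.2.1) + h 1 3 2 * (p.2.2.2.2.1 - q.2.2.2.2.1) = 0 := by
    linear_combination E4
  have F4 : (h 1 1 4 * h 2 1 2 / h 2 1 4) * (p.2.1 - q.2.1)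
      + (h 1 3 4 * h 2 3 2 / h 2 3 4) * (p.2.2.2.2.1 - q.2.2.2.2.1) = 0 := by
    linear_combination E5 - (h 1 1 4 * h 3 1 1 / h 3 1 4) * hA1
      - (h 1 2 4 * h 3 2 1 / h 3 2 4) * hB1
  obtain ⟨hA2, hC1⟩ := solve2 hdet2 F3 (by linear_combination F4)
  have F5 : h 2 2 3 * (p.2.2.2.1 - q.2.2.2.1) + h 2 3 3 * (p.2.2.2.2.2 - q.2.2.2.2.2) = 0 := by
    linear_combination E6
  have F6 : (h 2 2 5 * h 1 2 3 / h 1 2 5) * (p.2.2.2.1 - q.2.2.2.1)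
      + (h 2 3 5 * h 1 3 3 / h 1 3 5) * (p.2.2.2.2.2 - q.2.2.2.2.2) = 0 := by
    linear_combination E7 - (h 2 1 5 * h 3 1 1 / h 3 1 5) * hA1
      - (h 2 2 5 * h 3 2 1 / h 3 2 5) * hB1
  obtain ⟨hB2, hC2⟩ := solve2 hdet3 F5 (by linear_combination F6)
  obtain ⟨a1, a2, b1, b2, c1, c2⟩ := p
  obtain ⟨a1', a2', b1', b2', c1', c2'⟩ := q
  simp only [Prod.mk.injEq]
  exact ⟨sub_eq_zero.mp hA1, sub_eq_zero.mp hA2, sub_eq_zero.mp hB1,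
    sub_eq_zero.mp hB2, sub_eq_zero.mp hC1, sub_eq_zero.mp hC2⟩
end

section
/- For every real S > 0, [(4/3)·log₂(1+2S) + (4/3)·log₂(1 + 1/(1 + 1/S))] − [(2/3)·log₂(1+2S) + (2/3)·log₂(1 + (2/3)S)] ≤ (2/3)·log₂ 3 + 4/3, and moreover (2/3)·log₂ 3 + 4/3 ≤ 2.39. -/
/-- Gap bound in the proof of Corollary 2: for every real `S > 0`, the difference
between the outer bound `(4/3)log₂(1+2S) + (4/3)log₂(1+1/(1+1/S))` and the achievable
rate `(2/3)log₂(1+2S) + (2/3)log₂(1+(2/3)S)` is at most `(2/3)log₂ 3 + 4/3`, and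
`(2/3)log₂ 3 + 4/3 ≤ 2.39`. -/
theorem xchannel_gap_bound :
    (∀ S : ℝ, 0 < S →
      ((4 / 3) * Real.logb 2 (1 + 2 * S)
          + (4 / 3) * Real.logb 2 (1 + 1 / (1 + 1 / S)))
        - ((2 / 3) * Real.logb 2 (1 + 2 * S)
          + (2 / 3) * Real.logb 2 (1 + (2 / 3) * S))
        ≤ (2 / 3) * Real.logb 2 3 + 4 / 3) ∧
    (2 / 3) * Real.logb 2 3 + 4 / 3 ≤ 2.39 := by
  constructor
  · intro S hS
    have hS1 : (0:ℝ) < 1 + 1 / S := by positivity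
    have h1 : Real.logb 2 (1 + 1 / (1 + 1 / S)) ≤ 1 := by
      have hle : 1 + 1 / (1 + 1 / S) ≤ 2 := by
        have : 1 / (1 + 1 / S) ≤ 1 := by
          rw [div_le_one hS1]
          nlinarith [one_div_pos.mpr hS]
        linarith
      calc Real.logb 2 (1 + 1 / (1 + 1 / S)) ≤ Real.logb 2 2 :=
            Real.logb_le_logb_of_le (by norm_num) (by positivity) hle
        _ = 1 := Real.logb_self_eq_one (by norm_num)
    have h2 : Real.logb 2 (1 + 2 * S)
        ≤ Real.logb 2 3 + Real.logb 2 (1 + (2 / 3) * S) := by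
      have hmul : Real.logb 2 3 + Real.logb 2 (1 + (2 / 3) * S)
          = Real.logb 2 (3 * (1 + (2 / 3) * S)) := by
        rw [Real.logb_mul (by norm_num) (by positivity)]
      rw [hmul]
      apply Real.logb_le_logb_of_le (by norm_num) (by positivity)
      nlinarith
    linarith
  · have hp : (3:ℝ) ^ (200:ℕ) ≤ 2 ^ (317:ℕ) := by
      rw [show (317:ℕ) = 17 + 100 * 3 from rfl, pow_add, pow_mul]; norm_num
    have hlog := Real.log_le_log (by positivity) hp
    rw [Real.log_pow, Real.log_pow] at hlog
    have h2 : (0:ℝ) < Real.log 2 := Real.log_pos (by norm_num)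
    have : Real.logb 2 3 ≤ 317 / 200 := by
      rw [Real.logb, div_le_iff₀ h2]
      push_cast at hlog
      linarith
    linarith
end

section
/- Let S > 0 be real, let B = log₂(1 + 2S) + log₂(1 + S/(1+S)), and suppose real numbers R₁₁, R₁₂, R₂₁, R₂₂ satisfy R₁₁ + R₁₂ + R₂₂ ≤ B, R₂₂ + R₁₁ + R₂₁ ≤ B, R₁₁ + R₁₂ + R₂₁ ≤ B, and R₂₂ + R₂₁ + R₁₂ ≤ B. Then (R₁₁ + R₁₂ + R₂₁ + R₂₂) − [(2/3)·log₂(1 + 2S) + (2/3)·log₂(1 + (2/3)S)] ≤ 2.39. In words: for the two-user X-channel with unit-modulus channel coefficients, the gap between the sum-capacity outer bound of Lemma 1 and the sum-rate achieved by the proposed scheme is at most 2.39 bits for all SNR values S > 0. -/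
lemma logb_two_three_le : Real.logb 2 3 ≤ 1.585 := by
  have hlog2 : (0.6931471803 : ℝ) < Real.log 2 := Real.log_two_gt_d9
  have h12 : (12 : ℝ) * Real.log 3 = Real.log 531441 := by
    rw [show (531441 : ℝ) = 3 ^ (12 : ℕ) by norm_num, Real.log_pow]
    push_cast; ring
  have h19 : (19 : ℝ) * Real.log 2 = Real.log 524288 := by
    rw [show (524288 : ℝ) = 2 ^ (19 : ℕ) by norm_num, Real.log_pow]
    push_cast; ring
  have hdiv : Real.log ((531441 : ℝ) / 524288) = Real.log 531441 - Real.log 524288 :=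
    Real.log_div (by norm_num) (by norm_num)
  have hle : Real.log ((531441 : ℝ) / 524288) ≤ (531441 : ℝ) / 524288 - 1 :=
    Real.log_le_sub_one_of_pos (by norm_num)
  have hlog3 : Real.log 3 ≤ 1.585 * Real.log 2 := by nlinarith
  rw [Real.logb, div_le_iff₀ (by positivity)]
  linarith

/-- Corollary 2 of the paper: for the two-user X-channel with unit-modulus channel
coefficients, if the rates satisfy the four outer-bound inequalities of Lemma 1 with
common right-hand side `B = log₂(1+2S) + log₂(1 + S/(1+S))`, then the gap between the
sum rate and the rate `(2/3)log₂(1+2S) + (2/3)log₂(1+(2/3)S)` achieved by the proposed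
scheme is at most `2.39` bits, for all SNR values `S > 0`. -/
theorem xchannel_constant_gap
    (S : ℝ) (hS : 0 < S) (R₁₁ R₁₂ R₂₁ R₂₂ B : ℝ)
    (hB : B = Real.logb 2 (1 + 2 * S) + Real.logb 2 (1 + S / (1 + S)))
    (h1 : R₁₁ + R₁₂ + R₂₂ ≤ B)
    (h2 : R₂₂ + R₁₁ + R₂₁ ≤ B)
    (h3 : R₁₁ + R₁₂ + R₂₁ ≤ B)
    (h4 : R₂₂ + R₂₁ + R₁₂ ≤ B) :
    (R₁₁ + R₁₂ + R₂₁ + R₂₂)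
        - ((2 / 3) * Real.logb 2 (1 + 2 * S)
          + (2 / 3) * Real.logb 2 (1 + (2 / 3) * S)) ≤ 2.39 := by
  have h1S : (0:ℝ) < 1 + S := by linarith
  -- logb 2 (1+2S) ≤ logb 2 3 + logb 2 (1 + (2/3)S)
  have hA : Real.logb 2 (1 + 2 * S) ≤ Real.logb 2 3 + Real.logb 2 (1 + (2/3) * S) := by
    rw [← Real.logb_mul (by norm_num) (by positivity)]
    apply Real.logb_le_logb_of_le (by norm_num) (by positivity)
    nlinarith
  -- logb 2 (1 + S/(1+S)) ≤ 1
  have hC : Real.logb 2 (1 + S / (1 + S)) ≤ 1 := by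
    have harg : 1 + S / (1 + S) ≤ 2 := by
      have : S / (1 + S) ≤ 1 := by
        rw [div_le_one h1S]; linarith
      linarith
    calc Real.logb 2 (1 + S / (1 + S)) ≤ Real.logb 2 2 :=
          Real.logb_le_logb_of_le (by norm_num) (by positivity) harg
      _ = 1 := Real.logb_self_eq_one (by norm_num)
  have h3lb := logb_two_three_le
  linarith
end
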